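/- Let F_q be a finite field of characteristic p, let n be a positive integer not divisible by p, let R = F_q[X]/(X^n − 1), and let Q_n = 1 + X + ⋯ + X^{n−1} ∈ F_q[X]. Suppose f ∈ R is such that the image of f in F_q[X]/(Q_n) is a unit. Then for every D ∈ F_q[X] divisible by X − 1 and all integers N, M ≥ 1: D^N·f ≡ D^M·f (mod X^n − 1) holds if and only if D^N·g ≡ D^M·g (mod X^n − 1) holds for every g ∈ R. -/

import Mathlib

open Polynomial

/-- Lemma 1 (algebraic content): if `f` has unit image in `F_q[X]/(Q_n)`, then for every
differential operator `D` (divisible by `X - 1`) and all `N, M ≥ 1`, the congruence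
`D^N f ≡ D^M f (mod X^n - 1)` holds iff it holds for every `g`. -/
theorem stmt0 {F : Type*} [Field F] [Fintype F] (p n : ℕ) [Fact p.Prime] [CharP F p]
    (hn : 0 < n) (hpn : ¬ p ∣ n) (f : F[X])
    (hf : IsUnit (Ideal.Quotient.mk
      (Ideal.span {(∑ i ∈ Finset.range n, X ^ i : F[X])}) f)) :
    ∀ D : F[X], (X - 1 : F[X]) ∣ D → ∀ N M : ℕ, 1 ≤ N → 1 ≤ M →
      ((Ideal.Quotient.mk (Ideal.span {(X ^ n - 1 : F[X])})) (D ^ N * f) =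
        (Ideal.Quotient.mk (Ideal.span {(X ^ n - 1 : F[X])})) (D ^ M * f) ↔
      ∀ g : F[X],
        (Ideal.Quotient.mk (Ideal.span {(X ^ n - 1 : F[X])})) (D ^ N * g) =
        (Ideal.Quotient.mk (Ideal.span {(X ^ n - 1 : F[X])})) (D ^ M * g)) := by
  intro D hD N M hN hM
  set Q : F[X] := ∑ i ∈ Finset.range n, X ^ i with hQ
  constructor
  · intro h g
    -- reduce to divisibility
    rw [Ideal.Quotient.eq, Ideal.mem_span_singleton] at h ⊢
    have hfac : (X ^ n - 1 : F[X]) = Q * (X - 1) := (geom_sum_mul X n).symm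
    -- Q divides (D^N - D^M) * f
    have hQdvd : Q ∣ (D ^ N - D ^ M) * f := by
      have : Q ∣ D ^ N * f - D ^ M * f := dvd_trans ⟨X - 1, hfac⟩ h
      simpa [sub_mul] using this
    -- f is unit mod Q, so Q ∣ D^N - D^M
    have hQ1 : Q ∣ D ^ N - D ^ M := by
      have h0 : (Ideal.Quotient.mk (Ideal.span {Q})) ((D ^ N - D ^ M) * f) = 0 := by
        rwa [Ideal.Quotient.eq_zero_iff_mem, Ideal.mem_span_singleton]
      rw [map_mul] at h0
      have : (Ideal.Quotient.mk (Ideal.span {Q})) (D ^ N - D ^ M) = 0 :=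
        (IsUnit.mul_left_eq_zero hf).mp h0
      rwa [Ideal.Quotient.eq_zero_iff_mem, Ideal.mem_span_singleton] at this
    -- X - 1 divides D^N - D^M
    have hX1 : (X - 1 : F[X]) ∣ D ^ N - D ^ M :=
      dvd_sub (hD.trans (dvd_pow_self D (Nat.one_le_iff_ne_zero.mp hN)))
        (hD.trans (dvd_pow_self D (Nat.one_le_iff_ne_zero.mp hM)))
    -- coprimality of X - 1 and Q
    have hcop : IsCoprime (X - 1 : F[X]) Q := by
      have hirr : Irreducible (X - 1 : F[X]) := by
        simpa using irreducible_X_sub_C (1 : F)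
      rw [hirr.coprime_iff_not_dvd]
      intro hdvd
      have hroot : Q.eval 1 = 0 := by
        have : IsRoot Q 1 := by
          have := (dvd_iff_isRoot (a := (1 : F))).mp (by simpa using hdvd)
          simpa using this
        simpa using this
      have : ((n : F)) = 0 := by simpa [hQ, eval_finset_sum] using hroot
      exact hpn ((CharP.cast_eq_zero_iff F p n).mp this)
    have : (X ^ n - 1 : F[X]) ∣ D ^ N - D ^ M := by
      rw [hfac, mul_comm]
      exact hcop.mul_dvd hX1 hQ1
    exact (sub_mul (D ^ N) (D ^ M) g) ▸ this.mul_right g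
  · intro h
    exact h f
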